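/- If X is a set with ℚ ⊆ X ⊆ ℝ, then the set of order-preserving maps f : X → X (i.e., maps with x ≤ y → f(x) ≤ f(y)) has cardinality exactly 2^{ℵ₀}. -/

import Mathlib

open Cardinal Set

namespace Stmt12

variable {X : Set ℝ}

/-- The rational `q` as an element of `X`. -/
noncomputable def qX (hQ : Set.range ((↑) : ℚ → ℝ) ⊆ X) (q : ℚ) : X :=
  ⟨(q : ℝ), hQ ⟨q, rfl⟩⟩

/-- Sup of the values of `f` at rationals below `x`. -/
noncomputable def lsup (hQ : Set.range ((↑) : ℚ → ℝ) ⊆ X) (f : X → X) (x : X) : ℝ :=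
  sSup ((fun q : ℚ => (f (qX hQ q) : ℝ)) '' {q : ℚ | (q : ℝ) < (x : ℝ)})

variable (hQ : Set.range ((↑) : ℚ → ℝ) ⊆ X)

lemma lsup_nonempty (f : X → X) (x : X) :
    ((fun q : ℚ => (f (qX hQ q) : ℝ)) '' {q : ℚ | (q : ℝ) < (x : ℝ)}).Nonempty := by
  obtain ⟨q, hq⟩ := exists_rat_lt (x : ℝ)
  exact ⟨_, ⟨q, hq, rfl⟩⟩

lemma lsup_bdd {f : X → X} (hf : Monotone f) (x : X) :
    (f x : ℝ) ∈ upperBounds ((fun q : ℚ => (f (qX hQ q) : ℝ)) '' {q : ℚ | (q : ℝ) < (x : ℝ)}) := by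
  rintro y ⟨q, hq, rfl⟩
  exact Subtype.coe_le_coe.mpr (hf (by exact_mod_cast hq.le))

lemma lsup_le {f : X → X} (hf : Monotone f) (x : X) : lsup hQ f x ≤ (f x : ℝ) :=
  csSup_le (lsup_nonempty hQ f x) (lsup_bdd hQ hf x)

lemma le_lsup {f : X → X} (hf : Monotone f) (x : X) {q : ℚ} (h : (q : ℝ) < (x : ℝ)) :
    (f (qX hQ q) : ℝ) ≤ lsup hQ f x :=
  le_csSup ⟨_, lsup_bdd hQ hf x⟩ ⟨q, h, rfl⟩

/-- The exceptional set where `f x` differs from the left sup. -/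
def E (hQ : Set.range ((↑) : ℚ → ℝ) ⊆ X) (f : X → X) : Set X :=
  {x : X | (f x : ℝ) ≠ lsup hQ f x}

lemma lsup_lt {f : X → X} (hf : Monotone f) {x : X} (hx : x ∈ E hQ f) :
    lsup hQ f x < (f x : ℝ) :=
  lt_of_le_of_ne (lsup_le hQ hf x) (Ne.symm hx)

lemma fx_le_lsup {f : X → X} (hf : Monotone f) {x y : X} (hxy : (x : ℝ) < (y : ℝ)) :
    (f x : ℝ) ≤ lsup hQ f y := by
  obtain ⟨r, hr1, hr2⟩ := exists_rat_btwn hxy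
  calc (f x : ℝ) ≤ (f (qX hQ r) : ℝ) := Subtype.coe_le_coe.mpr (hf (by exact_mod_cast hr1.le))
    _ ≤ lsup hQ f y := le_lsup hQ hf y hr2

lemma countable_E {f : X → X} (hf : Monotone f) : (E hQ f).Countable := by
  have hex : ∀ x : E hQ f, ∃ q : ℚ, lsup hQ f x < (q : ℝ) ∧ (q : ℝ) < (f x : ℝ) := by
    intro x
    exact exists_rat_btwn (lsup_lt hQ hf x.2)
  choose g hg1 hg2 using hex
  rw [← Set.countable_coe_iff]
  refine Function.Injective.countable (f := g) ?_
  intro x y hxy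
  by_contra hne
  have hne' : (x : X) ≠ (y : X) := fun h => hne (Subtype.ext h)
  have hne'' : ((x : X) : ℝ) ≠ ((y : X) : ℝ) := fun h => hne' (Subtype.ext h)
  rcases lt_or_gt_of_ne hne'' with h | h
  · have h1 : ((g x : ℚ) : ℝ) < (f x : ℝ) := hg2 x
    have h2 : (f x : ℝ) ≤ lsup hQ f y := fx_le_lsup hQ hf h
    have h3 : lsup hQ f y < ((g y : ℚ) : ℝ) := hg1 y
    rw [hxy] at h1
    exact absurd (h1.trans_le h2) (not_lt.mpr h3.le)
  · have h1 : ((g y : ℚ) : ℝ) < (f y : ℝ) := hg2 y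
    have h2 : (f y : ℝ) ≤ lsup hQ f x := fx_le_lsup hQ hf h
    have h3 : lsup hQ f x < ((g x : ℚ) : ℝ) := hg1 x
    rw [hxy] at h3
    exact absurd (h1.trans_le h2) (not_lt.mpr h3.le)

/-- The graph of `f` over the exceptional set. -/
def G (hQ : Set.range ((↑) : ℚ → ℝ) ⊆ X) (f : X → X) : Set (ℝ × ℝ) :=
  (fun x : X => ((x : ℝ), (f x : ℝ))) '' (E hQ f)

lemma countable_G {f : X → X} (hf : Monotone f) : (G hQ f).Countable :=
  (countable_E hQ hf).image _

/-- A monotone map is determined by its values at rationals and its exceptional graph. -/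
lemma determined {f g : X → X} (hf : Monotone f) (hg : Monotone g)
    (hrat : ∀ q : ℚ, f (qX hQ q) = g (qX hQ q)) (hgraph : G hQ f = G hQ g) : f = g := by
  have hlsup : ∀ x : X, lsup hQ f x = lsup hQ g x := by
    intro x
    have hfun : (fun q : ℚ => (f (qX hQ q) : ℝ)) = fun q : ℚ => (g (qX hQ q) : ℝ) :=
      funext fun q => by rw [hrat]
    unfold lsup
    rw [hfun]
  funext x
  by_cases hxf : x ∈ E hQ f
  · have : ((x : ℝ), (f x : ℝ)) ∈ G hQ g := hgraph ▸ ⟨x, hxf, rfl⟩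
    obtain ⟨y, _, hy⟩ := this
    have hy1 : (y : ℝ) = (x : ℝ) := congrArg Prod.fst hy
    have hy2 : (g y : ℝ) = (f x : ℝ) := congrArg Prod.snd hy
    have : y = x := Subtype.ext hy1
    rw [this] at hy2
    exact Subtype.ext hy2.symm
  · by_cases hxg : x ∈ E hQ g
    · have : ((x : ℝ), (g x : ℝ)) ∈ G hQ f := hgraph ▸ ⟨x, hxg, rfl⟩
      obtain ⟨y, hyE, hy⟩ := this
      have hy1 : (y : ℝ) = (x : ℝ) := congrArg Prod.fst hy
      have : y = x := Subtype.ext hy1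
      rw [this] at hyE
      exact absurd hyE hxf
    · have h1 : (f x : ℝ) = lsup hQ f x := not_not.mp hxf
      have h2 : (g x : ℝ) = lsup hQ g x := not_not.mp hxg
      exact Subtype.ext (by rw [h1, h2, hlsup])

lemma upper_bound (hQ : Set.range ((↑) : ℚ → ℝ) ⊆ X) :
    Cardinal.mk {f : X → X // Monotone f} ≤ Cardinal.continuum := by
  -- inject into (ℚ → ℝ) × countable subsets of ℝ × ℝ
  have key : Cardinal.mk {f : X → X // Monotone f} ≤
      Cardinal.mk ((ℚ → ℝ) × {s : Set (ℝ × ℝ) // s.Countable}) := by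
    refine Cardinal.mk_le_of_injective (f := fun f =>
      (fun q : ℚ => (f.1 (qX hQ q) : ℝ), ⟨G hQ f.1, countable_G hQ f.2⟩)) ?_
    rintro ⟨f, hf⟩ ⟨g, hg⟩ h
    have h1 := congrArg Prod.fst h
    have h2 := congrArg (fun p => (p.2 : Set (ℝ × ℝ))) h
    simp only at h1 h2
    have hrat : ∀ q : ℚ, f (qX hQ q) = g (qX hQ q) := by
      intro q
      exact Subtype.ext (congrFun h1 q)
    exact Subtype.ext (determined hQ hf hg hrat h2)
  refine key.trans ?_
  have hA : Cardinal.mk (ℚ → ℝ) = Cardinal.continuum := by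
    rw [Cardinal.mk_arrow]
    simp [Cardinal.mk_real, Cardinal.mk_denumerable ℚ, Cardinal.continuum_power_aleph0]
  have hB : Cardinal.mk {s : Set (ℝ × ℝ) // s.Countable} ≤ Cardinal.continuum := by
    have hsurj : Function.Surjective (fun g : ℕ → Option (ℝ × ℝ) =>
        (⟨{p | ∃ n, g n = some p},
          (Set.countable_range g).preimage (Option.some_injective _) |>.mono
            (by rintro p ⟨n, hn⟩; exact ⟨n, hn⟩)⟩ :
          {s : Set (ℝ × ℝ) // s.Countable})) := by
      rintro ⟨s, hs⟩
      rcases s.eq_empty_or_nonempty with rfl | hne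
      · exact ⟨fun _ => none, Subtype.ext (by ext p; simp)⟩
      · obtain ⟨u, hu⟩ := hs.exists_eq_range hne
        refine ⟨fun n => some (u n), Subtype.ext ?_⟩
        ext p
        simp [hu, Set.mem_range, eq_comm]
    have := Cardinal.mk_le_of_surjective hsurj
    refine this.trans ?_
    rw [Cardinal.mk_arrow]
    have hopt : Cardinal.mk (Option (ℝ × ℝ)) = Cardinal.continuum := by
      rw [Cardinal.mk_option, Cardinal.mk_prod]
      simp [Cardinal.mk_real]
      rw [Cardinal.add_one_eq (Cardinal.aleph0_le_continuum)]
    simp [hopt, Cardinal.mk_denumerable, Cardinal.continuum_power_aleph0]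
  calc Cardinal.mk ((ℚ → ℝ) × {s : Set (ℝ × ℝ) // s.Countable})
      = Cardinal.mk (ℚ → ℝ) * Cardinal.mk {s : Set (ℝ × ℝ) // s.Countable} :=
        by rw [Cardinal.mk_prod]; simp
    _ ≤ Cardinal.continuum * Cardinal.continuum := by
        rw [hA]; exact mul_le_mul_right hB _
    _ = Cardinal.continuum := Cardinal.mul_eq_self Cardinal.aleph0_le_continuum

lemma lower_bound (hQ : Set.range ((↑) : ℚ → ℝ) ⊆ X) :
    Cardinal.continuum ≤ Cardinal.mk {f : X → X // Monotone f} := by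
  rw [← Cardinal.mk_real]
  refine Cardinal.mk_le_of_injective (f := fun a : ℝ =>
    (⟨fun x : X => if (x : ℝ) < a then qX hQ 0 else qX hQ 1, ?_⟩ :
      {f : X → X // Monotone f})) ?_
  · intro x y hxy
    dsimp only
    split_ifs with h1 h2 h2
    · exact le_refl _
    · exact Subtype.mk_le_mk.mpr (by norm_num)
    · exact absurd ((Subtype.coe_le_coe.mpr hxy).trans_lt h2) h1
    · exact le_refl _
  · intro a b hab
    by_contra hne
    rcases lt_or_gt_of_ne hne with h | h
    · obtain ⟨q, hq1, hq2⟩ := exists_rat_btwn h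
      have := congrFun (congrArg Subtype.val hab) (qX hQ q)
      simp only [qX] at this
      simp only [hq2, not_lt.mpr hq1.le, if_true, if_false, ite_true, ite_false] at this
      have : ((1 : ℚ) : ℝ) = ((0 : ℚ) : ℝ) := congrArg Subtype.val this
      norm_num at this
    · obtain ⟨q, hq1, hq2⟩ := exists_rat_btwn h
      have := congrFun (congrArg Subtype.val hab) (qX hQ q)
      simp only [qX] at this
      simp only [hq2, not_lt.mpr hq1.le, if_true, if_false, ite_true, ite_false] at this
      have : ((0 : ℚ) : ℝ) = ((1 : ℚ) : ℝ) := congrArg Subtype.val this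
      norm_num at this

end Stmt12

theorem stmt_12 (X : Set ℝ) (hQ : Set.range ((↑) : ℚ → ℝ) ⊆ X) :
    Cardinal.mk {f : X → X // Monotone f} = Cardinal.continuum := by
  exact le_antisymm (Stmt12.upper_bound hQ) (Stmt12.lower_bound hQ)
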